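/- With v as above, if r₁ ≤ r₂ are two initial interest rates and the interest rate process satisfies the pathwise comparison r_t^{r₁} ≤ r_t^{r₂} for all t a.s., then v(t, r₂, x) ≤ v(t, r₁, x) for all (t,x). That is, the American put value is non-increasing in the initial interest rate. -/

import Mathlib

open MeasureTheory ProbabilityTheory Filter Set

noncomputable section

variable {Ω : Type*} [m : MeasurableSpace Ω]

/-- The stock price `X_t^{r,x} = x · exp(σ B_t + ∫₀^t (r_s − σ²/2) ds)`. -/
def stock (B rp : ℝ → Ω → ℝ) (σ x t : ℝ) (ω : Ω) : ℝ :=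
  x * Real.exp (σ * B t ω + ∫ s in (0:ℝ)..t, (rp s ω - σ ^ 2 / 2))

/-- Discounted expected payoff `E[exp(−∫₀^τ r_s ds) (K − X_τ^{r,x})⁺]` of the
stopping rule `τ`. -/
def payoff (μ : Measure Ω) (B rp : ℝ → Ω → ℝ) (σ K x : ℝ) (τ : Ω → ℝ) : ℝ :=
  ∫ ω, Real.exp (-∫ s in (0:ℝ)..(τ ω), rp s ω) *
    max (K - stock B rp σ x (τ ω) ω) 0 ∂μ

/-- The American put value
`v(t,x) = sup_{0 ≤ τ ≤ T−t} E[exp(−∫₀^τ r_s ds) (K − X_τ^{r,x})⁺]`,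
the supremum running over stopping times with values in `[0, T−t]`. -/
def value (μ : Measure Ω) (ℱ : Filtration ℝ m) (B rp : ℝ → Ω → ℝ)
    (σ K T t x : ℝ) : ℝ :=
  ⨆ τ : {τ : Ω → ℝ // IsStoppingTime ℱ (fun ω => (τ ω : WithTop ℝ)) ∧ ∀ ω, τ ω ∈ Set.Icc 0 (T - t)},
    payoff μ B rp σ K x τ.1

/-- Pulling the discount factor inside the positive part. -/
lemma exp_mul_max_eq (K x A I c : ℝ) :
    Real.exp (-I) * max (K - x * Real.exp (A + (I - c))) 0
      = max (K * Real.exp (-I) - x * Real.exp (A - c)) 0 := by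
  rw [mul_max_of_nonneg _ _ (Real.exp_pos (-I)).le, mul_zero, mul_sub]
  congr 2
  · ring
  · rw [show Real.exp (-I) * (x * Real.exp (A + (I - c)))
        = x * (Real.exp (-I) * Real.exp (A + (I - c))) from by ring, ← Real.exp_add]
    congr 1
    ring

/-- Rewriting the discounted payoff integrand. -/
lemma integrand_eq (B rp : ℝ → Ω → ℝ) (σ K x s : ℝ) (ω : Ω)
    (hi : IntervalIntegrable (fun u => rp u ω) MeasureTheory.volume 0 s) :
    Real.exp (-∫ u in (0:ℝ)..s, rp u ω) * max (K - stock B rp σ x s ω) 0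
      = max (K * Real.exp (-∫ u in (0:ℝ)..s, rp u ω)
          - x * Real.exp (σ * B s ω - (s - 0) * (σ ^ 2 / 2))) 0 := by
  have h1 : (∫ u in (0:ℝ)..s, (rp u ω - σ ^ 2 / 2))
      = (∫ u in (0:ℝ)..s, rp u ω) - (s - 0) * (σ ^ 2 / 2) := by
    rw [intervalIntegral.integral_sub hi (intervalIntegrable_const),
      intervalIntegral.integral_const, smul_eq_mul]
  rw [stock, h1]
  exact exp_mul_max_eq K x (σ * B s ω) _ _

lemma stock_nonneg (B rp : ℝ → Ω → ℝ) {σ x : ℝ} (hx : 0 ≤ x) (t : ℝ) (ω : Ω) :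
    0 ≤ stock B rp σ x t ω :=
  mul_nonneg hx (Real.exp_pos _).le

/-- If `r₁ ≤ r₂` are two initial interest rates and the corresponding
interest rate processes satisfy the pathwise comparison `r_t^{r₁} ≤ r_t^{r₂}` for all
`t` a.s., then `v(t, r₂, x) ≤ v(t, r₁, x)` for all `(t, x)`: the American put value is
non-increasing in the initial interest rate. -/
theorem value_antitone_in_initial_rate
    (μ : Measure Ω) [IsProbabilityMeasure μ] (ℱ : Filtration ℝ m)
    (B : ℝ → Ω → ℝ) (σ K T : ℝ) (hσ : 0 < σ) (hK : 0 < K) (hT : 0 < T)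
    (r₁ r₂ : ℝ) (hr : r₁ ≤ r₂)
    (rp1 rp2 : ℝ → Ω → ℝ)   -- the rate processes started from `r₁` and `r₂`
    (hinit : ∀ ω, rp1 0 ω = r₁ ∧ rp2 0 ω = r₂)
    (hcomp : ∀ᵐ ω ∂μ, ∀ t, rp1 t ω ≤ rp2 t ω)
    (hintegr : ∀ᵐ ω ∂μ, ∀ t ∈ Set.Icc 0 T,
      IntervalIntegrable (fun s => rp1 s ω) MeasureTheory.volume 0 t ∧
      IntervalIntegrable (fun s => rp2 s ω) MeasureTheory.volume 0 t)
    (hpay : ∀ x > (0:ℝ), ∀ τ : Ω → ℝ, (∀ ω, τ ω ∈ Set.Icc 0 T) →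
      Integrable (fun ω => Real.exp (-∫ s in (0:ℝ)..(τ ω), rp1 s ω) *
        max (K - stock B rp1 σ x (τ ω) ω) 0) μ) :
    ∀ t ∈ Set.Icc 0 T, ∀ x > (0:ℝ),
      value μ ℱ B rp2 σ K T t x ≤ value μ ℱ B rp1 σ K T t x := by
  intro t ht x hx
  have hsub : Set.Icc (0:ℝ) (T - t) ⊆ Set.Icc 0 T :=
    Set.Icc_subset_Icc le_rfl (by linarith [ht.1])
  -- pointwise comparison of payoffs
  have hpt : ∀ τ : {τ : Ω → ℝ // IsStoppingTime ℱ (fun ω => (τ ω : WithTop ℝ)) ∧ ∀ ω, τ ω ∈ Set.Icc 0 (T - t)},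
      payoff μ B rp2 σ K x τ.1 ≤ payoff μ B rp1 σ K x τ.1 := by
    intro τ
    have hτT : ∀ ω, τ.1 ω ∈ Set.Icc 0 T := fun ω => hsub (τ.2.2 ω)
    have hint1 := hpay x hx τ.1 hτT
    refine integral_mono_of_nonneg ?_ hint1 ?_
    · filter_upwards with ω
      exact mul_nonneg (Real.exp_pos _).le (le_max_right _ _)
    · filter_upwards [hcomp, hintegr] with ω hc hi
      obtain ⟨hi1, hi2⟩ := hi (τ.1 ω) (hτT ω)
      have hs0 : (0:ℝ) ≤ τ.1 ω := (hτT ω).1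
      have hI : (∫ u in (0:ℝ)..(τ.1 ω), rp1 u ω) ≤ ∫ u in (0:ℝ)..(τ.1 ω), rp2 u ω :=
        intervalIntegral.integral_mono_on hs0 hi1 hi2 fun u _ => hc u
      rw [integrand_eq B rp1 σ K x (τ.1 ω) ω hi1, integrand_eq B rp2 σ K x (τ.1 ω) ω hi2]
      exact max_le_max (sub_le_sub_right
        (mul_le_mul_of_nonneg_left (Real.exp_le_exp.2 (neg_le_neg hI)) hK.le) _) le_rfl
  -- the `rp1`-payoffs are bounded above
  have hbdd : BddAbove (Set.range
      fun τ : {τ : Ω → ℝ // IsStoppingTime ℱ (fun ω => (τ ω : WithTop ℝ)) ∧ ∀ ω, τ ω ∈ Set.Icc 0 (T - t)} =>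
        payoff μ B rp1 σ K x τ.1) := by
    by_contra hnb
    have hch : ∀ n : ℕ, ∃ τ : {τ : Ω → ℝ // IsStoppingTime ℱ (fun ω => (τ ω : WithTop ℝ)) ∧
        ∀ ω, τ ω ∈ Set.Icc 0 (T - t)}, (n : ℝ) < payoff μ B rp1 σ K x τ.1 := by
      intro n
      rcases not_bddAbove_iff.1 hnb (n : ℝ) with ⟨y, ⟨τ, rfl⟩, hy⟩
      exact ⟨τ, hy⟩
    choose τs hτs using hch
    set g : ℕ → Ω → ℝ := fun n ω =>
      Real.exp (-∫ u in (0:ℝ)..((τs n).1 ω), rp1 u ω) *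
        max (K - stock B rp1 σ x ((τs n).1 ω) ω) 0 with hg
    have hgnn : ∀ n ω, 0 ≤ g n ω := fun n ω =>
      mul_nonneg (Real.exp_pos _).le (le_max_right _ _)
    set G : Ω → ℝ := fun ω => ⨆ n, g n ω with hG
    have hNex : ∀ ω, ∃ n, G ω - 1 ≤ g n ω := by
      intro ω
      by_cases hb : BddAbove (Set.range fun n => g n ω)
      · obtain ⟨n, hn⟩ := exists_lt_of_lt_ciSup
          (show G ω - 1 < G ω from by linarith)
        exact ⟨n, hn.le⟩
      · refine ⟨0, ?_⟩
        have h0 : G ω = 0 := Real.iSup_of_not_bddAbove hb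
        have := hgnn 0 ω
        linarith
    choose N hN using hNex
    set τ : Ω → ℝ := fun ω => (τs (N ω)).1 ω with hτ
    have hτT : ∀ ω, τ ω ∈ Set.Icc 0 T := fun ω => hsub ((τs (N ω)).2.2 ω)
    have hint := hpay x hx τ hτT
    -- a.e. the family `g · ω` is bounded above
    have haeP : ∀ᵐ ω ∂μ, BddAbove (Set.range fun n => g n ω) := by
      filter_upwards [hintegr] with ω hi
      have hiT : IntervalIntegrable (fun s => rp1 s ω) MeasureTheory.volume 0 T :=
        (hi T ⟨hT.le, le_rfl⟩).1
      refine ⟨K * Real.exp (∫ u in (0:ℝ)..T, |rp1 u ω|), ?_⟩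
      rintro y ⟨n, rfl⟩
      have hs : (τs n).1 ω ∈ Set.Icc 0 T := hsub ((τs n).2.2 ω)
      have hmax : max (K - stock B rp1 σ x ((τs n).1 ω) ω) 0 ≤ K :=
        max_le (by linarith [stock_nonneg B rp1 (σ := σ) hx.le ((τs n).1 ω) ω]) hK.le
      have habs : IntervalIntegrable (fun s => |rp1 s ω|) MeasureTheory.volume 0 T := hiT.abs
      have h1 : |∫ u in (0:ℝ)..((τs n).1 ω), rp1 u ω|
          ≤ ∫ u in (0:ℝ)..((τs n).1 ω), |rp1 u ω| :=
        intervalIntegral.abs_integral_le_integral_abs hs.1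
      have h2 : (∫ u in (0:ℝ)..((τs n).1 ω), |rp1 u ω|)
          ≤ ∫ u in (0:ℝ)..T, |rp1 u ω| := by
        have hsplit := intervalIntegral.integral_add_adjacent_intervals
          (μ := MeasureTheory.volume) (f := fun s => |rp1 s ω|)
          (a := 0) (b := (τs n).1 ω) (c := T)
          (habs.mono_set (Set.uIcc_subset_uIcc (by simp [Set.mem_uIcc, hT.le])
            (by simp [Set.mem_uIcc]; exact Or.inl ⟨hs.1, hs.2⟩)))
          (habs.mono_set (Set.uIcc_subset_uIcc
            (by simp [Set.mem_uIcc]; exact Or.inl ⟨hs.1, hs.2⟩)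
            (by simp [Set.mem_uIcc, hT.le])))
        have hnn : (0:ℝ) ≤ ∫ u in ((τs n).1 ω)..T, |rp1 u ω| :=
          intervalIntegral.integral_nonneg hs.2 fun u _ => abs_nonneg _
        linarith [hsplit]
      have hexp : Real.exp (-∫ u in (0:ℝ)..((τs n).1 ω), rp1 u ω)
          ≤ Real.exp (∫ u in (0:ℝ)..T, |rp1 u ω|) := by
        apply Real.exp_le_exp.2
        have := neg_abs_le (∫ u in (0:ℝ)..((τs n).1 ω), rp1 u ω)
        linarith
      calc g n ω ≤ Real.exp (∫ u in (0:ℝ)..T, |rp1 u ω|) * K :=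
            mul_le_mul hexp hmax (le_max_right _ _) (Real.exp_pos _).le
        _ = K * Real.exp (∫ u in (0:ℝ)..T, |rp1 u ω|) := by ring
    -- for every n, the integral of the diagonal choice dominates `n - 1`
    have key : ∀ n : ℕ, (n : ℝ) - 1 ≤ ∫ ω, Real.exp (-∫ u in (0:ℝ)..(τ ω), rp1 u ω) *
        max (K - stock B rp1 σ x (τ ω) ω) 0 ∂μ := by
      intro n
      have hgn : Integrable (g n) μ := hpay x hx (τs n).1 fun ω => hsub ((τs n).2.2 ω)
      have hmono : (∫ ω, (g n ω - 1) ∂μ) ≤ ∫ ω, Real.exp (-∫ u in (0:ℝ)..(τ ω), rp1 u ω) *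
          max (K - stock B rp1 σ x (τ ω) ω) 0 ∂μ := by
        apply integral_mono_ae (hgn.sub (integrable_const 1)) hint
        filter_upwards [haeP] with ω hb
        have h1 : g n ω ≤ G ω := le_ciSup hb n
        have h2 : G ω - 1 ≤ g (N ω) ω := hN ω
        have h3 : g (N ω) ω = Real.exp (-∫ u in (0:ℝ)..(τ ω), rp1 u ω) *
            max (K - stock B rp1 σ x (τ ω) ω) 0 := rfl
        simp only [Pi.sub_apply]
        rw [← h3]
        linarith
      have heq : (∫ ω, (g n ω - 1) ∂μ) = (∫ ω, g n ω ∂μ) - 1 := by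
        rw [integral_sub hgn (integrable_const 1), integral_const]
        simp
      have hpn : (n : ℝ) < ∫ ω, g n ω ∂μ := hτs n
      linarith [hmono, heq.symm ▸ hmono]
    obtain ⟨n, hn⟩ := exists_nat_gt ((∫ ω, Real.exp (-∫ u in (0:ℝ)..(τ ω), rp1 u ω) *
        max (K - stock B rp1 σ x (τ ω) ω) 0 ∂μ) + 1)
    linarith [key n]
  exact ciSup_mono hbdd hpt
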